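/- (Utility of the watchdog mechanism, equations (8)–(9).) Let X be partitioned into disjoint sets B and A with p(A) > 0 and p(x) > 0 for all x ∈ X. Let R be a probability mass function on A and consider the mechanism with p(Y = x' | X = x) equal to the indicator 1{x' = x} for x ∈ B, equal to R(x') for x ∈ A and x' ∈ A, and 0 otherwise; let p_{XY} be the induced joint distribution of (X,Y) and p_Y the induced distribution of Y. Then, with the convention 0·log 0 = 0, the mutual information I(X;Y) = ∑_{x,y} p_{XY}(x,y) log(p_{XY}(x,y)/(p(x) p_Y(y))) satisfies I(X;Y) = H(X) − p(A)·H(q), where H(X) = −∑_{x∈X} p(x) log p(x), q(x) = p(x)/p(A) for x ∈ A, and H(q) = −∑_{x∈A} q(x) log q(x). -/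

import Mathlib

/-- Utility of the watchdog mechanism, equations (8)–(9): for the
mechanism that publishes `x ∈ B` unchanged and randomizes `x ∈ A` into `A`
according to a pmf `R`, the mutual information satisfies
`I(X;Y) = H(X) − p(A)·H(q)`, where `q(x) = p(x)/p(A)` on `A`
(convention `0·log 0 = 0` via an if-guard). -/
theorem stmt_7 {S X : Type*} [Fintype S] [Fintype X] [DecidableEq X]
    [Nonempty S] [Nonempty X]
    (p : S → X → ℝ)
    (hp_nonneg : ∀ s x, 0 ≤ p s x)
    (hp_sum : ∑ s, ∑ x, p s x = 1)
    (pX : X → ℝ) (hpX : ∀ x, pX x = ∑ s, p s x)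
    (hpX_pos : ∀ x, 0 < pX x)
    (B A : Finset X) (hdisj : Disjoint B A) (hpart : B ∪ A = Finset.univ)
    (pA : ℝ) (hpA : pA = ∑ x ∈ A, pX x)
    (hA_pos : 0 < pA)
    (R : X → ℝ) (hR_nonneg : ∀ y ∈ A, 0 ≤ R y) (hR_sum : ∑ y ∈ A, R y = 1)
    (M : X → X → ℝ)
    (hMB : ∀ x ∈ B, ∀ x', M x x' = if x' = x then 1 else 0)
    (hMA : ∀ x ∈ A, ∀ x' ∈ A, M x x' = R x')
    (hMA0 : ∀ x ∈ A, ∀ x' ∉ A, M x x' = 0)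
    (pXY : X → X → ℝ) (hpXY : ∀ x y, pXY x y = pX x * M x y)
    (pY : X → ℝ) (hpY : ∀ y, pY y = ∑ x, pXY x y)
    (I HX Hq : ℝ)
    (hI : I = ∑ x, ∑ y, if pXY x y = 0 then 0
      else pXY x y * Real.log (pXY x y / (pX x * pY y)))
    (hHX : HX = -∑ x, pX x * Real.log (pX x))
    (hHq : Hq = -∑ x ∈ A, (pX x / pA) * Real.log (pX x / pA)) :
    I = HX - pA * Hq := by
  have hpXne : ∀ x, pX x ≠ 0 := fun x => (hpX_pos x).ne'
  have hpAne : pA ≠ 0 := hA_pos.ne'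
  have huniv : (Finset.univ : Finset X) = B ∪ A := hpart.symm
  have hmem : ∀ x : X, x ∉ B → x ∈ A := by
    intro x hx
    have h : x ∈ B ∪ A := hpart ▸ Finset.mem_univ x
    exact (Finset.mem_union.mp h).resolve_left hx
  have hBA : ∀ x ∈ B, x ∉ A := fun x hx => Finset.disjoint_left.mp hdisj hx
  have hAB : ∀ x ∈ A, x ∉ B := fun x hx => Finset.disjoint_right.mp hdisj hx
  -- pY values
  have hpYB : ∀ y ∈ B, pY y = pX y := by
    intro y hy
    rw [hpY, Finset.sum_eq_single y]
    · rw [hpXY, hMB y hy, if_pos rfl, mul_one]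
    · intro x _ hxy
      rw [hpXY]
      by_cases hx : x ∈ B
      · rw [hMB x hx, if_neg (fun h => hxy h.symm), mul_zero]
      · rw [hMA0 x (hmem x hx) y (hBA y hy), mul_zero]
    · intro h; exact absurd (Finset.mem_univ y) h
  have hpYA : ∀ y ∈ A, pY y = pA * R y := by
    intro y hy
    rw [hpY, huniv, Finset.sum_union hdisj]
    have h1 : ∑ x ∈ B, pXY x y = 0 := by
      apply Finset.sum_eq_zero
      intro x hx
      rw [hpXY, hMB x hx, if_neg (fun h : y = x => hBA x hx (h ▸ hy)), mul_zero]
    have h2 : ∑ x ∈ A, pXY x y = pA * R y := by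
      rw [hpA, Finset.sum_mul]
      exact Finset.sum_congr rfl (fun x hx => by rw [hpXY, hMA x hx y hy])
    rw [h1, h2, zero_add]
  -- inner sums
  have hIB : ∀ x ∈ B, (∑ y, if pXY x y = 0 then 0
      else pXY x y * Real.log (pXY x y / (pX x * pY y)))
      = -(pX x * Real.log (pX x)) := by
    intro x hx
    rw [Finset.sum_eq_single x]
    · rw [hpXY, hMB x hx, if_pos rfl, mul_one, if_neg (hpXne x), hpYB x hx]
      have h : pX x / (pX x * pX x) = (pX x)⁻¹ := by field_simp
      rw [h, Real.log_inv]; ring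
    · intro y _ hyx
      rw [hpXY, hMB x hx, if_neg hyx, mul_zero, if_pos rfl]
    · intro h; exact absurd (Finset.mem_univ x) h
  have hIA : ∀ x ∈ A, (∑ y, if pXY x y = 0 then 0
      else pXY x y * Real.log (pXY x y / (pX x * pY y)))
      = -(pX x * Real.log pA) := by
    intro x hx
    have hterm : ∀ y, (if pXY x y = 0 then 0
        else pXY x y * Real.log (pXY x y / (pX x * pY y)))
        = (pX x * (-Real.log pA)) * M x y := by
      intro y
      by_cases hy : y ∈ A
      · rw [hpXY, hMA x hx y hy, hpYA y hy]
        by_cases hR : R y = 0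
        · rw [hR, mul_zero, if_pos rfl, mul_zero]
        · rw [if_neg (mul_ne_zero (hpXne x) hR)]
          have hRpos : 0 < R y := lt_of_le_of_ne (hR_nonneg y hy) (Ne.symm hR)
          have h : pX x * R y / (pX x * (pA * R y)) = pA⁻¹ := by
            rw [div_eq_iff (mul_ne_zero (hpXne x) (mul_ne_zero hpAne hR))]
            field_simp
          rw [h, Real.log_inv]; ring
      · rw [hpXY, hMA0 x hx y hy, mul_zero, if_pos rfl, mul_zero]
    have hMsum : ∑ y, M x y = 1 := by
      rw [huniv, Finset.sum_union hdisj]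
      have h1 : ∑ y ∈ B, M x y = 0 :=
        Finset.sum_eq_zero (fun y hy => hMA0 x hx y (hBA y hy))
      have h2 : ∑ y ∈ A, M x y = 1 := by
        rw [← hR_sum]
        exact Finset.sum_congr rfl (fun y hy => hMA x hx y hy)
      rw [h1, h2, zero_add]
    rw [Finset.sum_congr rfl (fun y _ => hterm y), ← Finset.mul_sum, hMsum]
    ring
  have hI' : I = (∑ x ∈ B, -(pX x * Real.log (pX x)))
      + ∑ x ∈ A, -(pX x * Real.log pA) := by
    rw [hI, huniv, Finset.sum_union hdisj]
    congr 1
    · exact Finset.sum_congr rfl (fun x hx => by rw [hpart]; exact hIB x hx)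
    · exact Finset.sum_congr rfl (fun x hx => by rw [hpart]; exact hIA x hx)
  have hHX' : HX = (-∑ x ∈ B, pX x * Real.log (pX x))
      - ∑ x ∈ A, pX x * Real.log (pX x) := by
    rw [hHX, huniv, Finset.sum_union hdisj]; ring
  have hHq' : pA * Hq = (-∑ x ∈ A, pX x * Real.log (pX x))
      + ∑ x ∈ A, pX x * Real.log pA := by
    rw [hHq, mul_neg, Finset.mul_sum]
    have h : ∀ x ∈ A, pA * (pX x / pA * Real.log (pX x / pA))
        = pX x * Real.log (pX x) - pX x * Real.log pA := by
      intro x _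
      rw [Real.log_div (hpXne x) hpAne]
      field_simp
    rw [Finset.sum_congr rfl h, Finset.sum_sub_distrib]
    ring
  rw [hI', hHX', hHq', Finset.sum_neg_distrib, Finset.sum_neg_distrib]
  ring
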